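/- Let S, E, I, A, R : ℝ → ℝ be differentiable and β : ℝ → ℝ, with constants γ, p, μ₁, μ₂, satisfying the SEIAR system: S' = -βS(I+A), E' = βS(I+A) - γE, I' = γpE - μ₁I, A' = γ(1-p)E - μ₂A, R' = μ₁I + μ₂A. Fix τ ∈ ℝ, and assume A(t)+I(t) ≠ 0 and E(t) - (E(t)+S(t))e^τ ≠ 0 for all t. Define S̃(t) = S(t) + E(t)(1 - e^{-τ}), Ẽ(t) = E(t)e^{-τ}, Ĩ = I, Ã = A, R̃ = R, γ̃ = γe^τ, and β̃(t) = [γE(t)(1-e^τ) - S(t)β(t)(A(t)+I(t))] / [(A(t)+I(t))(E(t) - (E(t)+S(t))e^τ)], with μ₁, μ₂, p unchanged. Then the transformed quantities satisfy the same SEIAR system with β, γ replaced by β̃, γ̃, and the outputs are unchanged: Ĩ = I, Ã = A, S̃ + Ẽ + R̃ = S + E + R. -/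

import Mathlib

open Real in
theorem stmt_7 (S E I A R β : ℝ → ℝ) (γ p μ₁ μ₂ : ℝ)
    (hS : ∀ t, HasDerivAt S (-(β t * S t * (I t + A t))) t)
    (hE : ∀ t, HasDerivAt E (β t * S t * (I t + A t) - γ * E t) t)
    (hI : ∀ t, HasDerivAt I (γ * p * E t - μ₁ * I t) t)
    (hA : ∀ t, HasDerivAt A (γ * (1 - p) * E t - μ₂ * A t) t)
    (hR : ∀ t, HasDerivAt R (μ₁ * I t + μ₂ * A t) t)
    (τ : ℝ) (hAI : ∀ t, A t + I t ≠ 0)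
    (hden : ∀ t, E t - (E t + S t) * exp τ ≠ 0)
    (S' E' I' A' R' β' : ℝ → ℝ) (γ' : ℝ)
    (hS' : ∀ t, S' t = S t + E t * (1 - exp (-τ)))
    (hE' : ∀ t, E' t = E t * exp (-τ))
    (hI' : ∀ t, I' t = I t) (hA' : ∀ t, A' t = A t)
    (hR' : ∀ t, R' t = R t)
    (hγ' : γ' = γ * exp τ)
    (hβ' : ∀ t, β' t =
      (γ * E t * (1 - exp τ) - S t * β t * (A t + I t)) /
      ((A t + I t) * (E t - (E t + S t) * exp τ))) :
    (∀ t, HasDerivAt S' (-(β' t * S' t * (I' t + A' t))) t) ∧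
    (∀ t, HasDerivAt E' (β' t * S' t * (I' t + A' t) - γ' * E' t) t) ∧
    (∀ t, HasDerivAt I' (γ' * p * E' t - μ₁ * I' t) t) ∧
    (∀ t, HasDerivAt A' (γ' * (1 - p) * E' t - μ₂ * A' t) t) ∧
    (∀ t, HasDerivAt R' (μ₁ * I' t + μ₂ * A' t) t) ∧
    (∀ t, I' t = I t) ∧ (∀ t, A' t = A t) ∧
    (∀ t, S' t + E' t + R' t = S t + E t + R t) := by
  have hexp : Real.exp (-τ) = (Real.exp τ)⁻¹ := Real.exp_neg τ
  have hene := Real.exp_ne_zero τ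
  have key : ∀ t, β' t * S' t * (I' t + A' t) =
      γ * E t * (1 - exp (-τ)) + exp (-τ) * (β t * S t * (I t + A t)) := by
    intro t
    have hD := hden t
    have hX := hAI t
    have hSval : S t + E t * (1 - exp (-τ)) = -exp (-τ) * (E t - (E t + S t) * exp τ) := by
      rw [hexp]; field_simp; ring
    rw [hβ' t, hS' t, hI' t, hA' t, hSval]
    have step : (γ * E t * (1 - exp τ) - S t * β t * (A t + I t)) /
        ((A t + I t) * (E t - (E t + S t) * exp τ)) *
        (-exp (-τ) * (E t - (E t + S t) * exp τ)) * (I t + A t) =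
        (γ * E t * (1 - exp τ) - S t * β t * (A t + I t)) * (-exp (-τ)) := by
      rw [div_mul_eq_mul_div, div_mul_eq_mul_div, div_eq_iff (mul_ne_zero hX hD)]
      ring
    rw [step, hexp]
    field_simp
    ring
  have hSfun : S' = fun t => S t + E t * (1 - exp (-τ)) := funext hS'
  have hEfun : E' = fun t => E t * exp (-τ) := funext hE'
  have hIfun : I' = I := funext hI'
  have hAfun : A' = A := funext hA'
  have hRfun : R' = R := funext hR'
  refine ⟨?_, ?_, ?_, ?_, ?_, hI', hA', ?_⟩
  · intro t
    rw [key t, hSfun]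
    have := (hS t).add ((hE t).mul_const (1 - exp (-τ)))
    refine this.congr_deriv ?_
    ring
  · intro t
    rw [key t, hγ', hE' t, hEfun]
    have := (hE t).mul_const (exp (-τ))
    refine this.congr_deriv ?_
    rw [hexp]
    field_simp
    ring
  · intro t
    rw [hIfun, hγ', hE' t]
    convert hI t using 1
    rw [hexp]
    field_simp
  · intro t
    rw [hAfun, hγ', hE' t]
    convert hA t using 1
    rw [hexp]
    field_simp
  · intro t
    rw [hRfun, hI' t, hA' t]
    exact hR t
  · intro t
    rw [hS' t, hE' t, hR' t]
    ring
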